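/- arXiv:1804.09831 — 2 statements merged into one kernel-verified Lean document; each statement's English description precedes it below -/
import Mathlib

section
/- Closed-loop constraint satisfaction from tube containment: if F s_t + G v_t ≤ f − h with h_k = sup_{e∈𝓔} ((F + GK)e)_k, and x_t = s_t + e_t with e_t ∈ 𝓔, u_t = K e_t + v_t, then F x_t + G u_t ≤ f. -/
theorem stmt_17 {n m q : ℕ} (𝓔 : Set (Fin n → ℝ)) (h𝓔ne : 𝓔.Nonempty)
    (h𝓔c : IsCompact 𝓔)
    (F : Matrix (Fin q) (Fin n) ℝ) (G : Matrix (Fin q) (Fin m) ℝ)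
    (K : Matrix (Fin m) (Fin n) ℝ) (f : Fin q → ℝ) (h : Fin q → ℝ)
    (hh : ∀ k, h k = sSup ((fun e => (F + G * K).mulVec e k) '' 𝓔))
    (s x e : Fin n → ℝ) (v u : Fin m → ℝ)
    (hfeas : ∀ k, F.mulVec s k + G.mulVec v k ≤ f k - h k)
    (hx : x = s + e) (he : e ∈ 𝓔) (hu : u = K.mulVec e + v) :
    ∀ k, F.mulVec x k + G.mulVec u k ≤ f k := by
  intro k
  have hcont : Continuous fun e => (F + G * K).mulVec e k := by
    simp only [Matrix.mulVec, dotProduct]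
    exact continuous_finset_sum _ fun i _ => (continuous_const.mul (continuous_apply i))
  have hbdd : BddAbove ((fun e => (F + G * K).mulVec e k) '' 𝓔) :=
    (h𝓔c.image hcont).bddAbove
  have hle : (F + G * K).mulVec e k ≤ h k := by
    rw [hh k]; exact le_csSup hbdd ⟨e, he, rfl⟩
  have hexp : F.mulVec x k + G.mulVec u k
      = (F.mulVec s k + G.mulVec v k) + (F + G * K).mulVec e k := by
    subst hx hu
    simp [Matrix.mulVec_add, Matrix.add_mulVec, Matrix.mulVec_mulVec]
    ring
  rw [hexp]
  have := hfeas k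
  linarith
end

section
/- The infinite Minkowski-sum set 𝓔 = {∑_{i=0}^{∞} Ψ^i d_i : d_i ∈ D} (with ‖Ψ‖ < 1, D compact convex containing 0) is the minimal set among closed sets S satisfying Ψ(S) + D ⊆ S and 0 ∈ S: any closed S with these properties contains 𝓔. -/
open Pointwise

theorem stmt_18 {n : ℕ}
    (Ψ : EuclideanSpace ℝ (Fin n) →L[ℝ] EuclideanSpace ℝ (Fin n)) (hΨ : ‖Ψ‖ < 1)
    (D : Set (EuclideanSpace ℝ (Fin n))) (hDc : IsCompact D) (hDconv : Convex ℝ D)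
    (hD0 : (0 : EuclideanSpace ℝ (Fin n)) ∈ D)
    (𝓔 : Set (EuclideanSpace ℝ (Fin n)))
    (h𝓔 : 𝓔 = {x | ∃ d : ℕ → EuclideanSpace ℝ (Fin n),
      (∀ i, d i ∈ D) ∧ HasSum (fun i => (Ψ ^ i) (d i)) x}) :
    ∀ S : Set (EuclideanSpace ℝ (Fin n)), IsClosed S →
      (0 : EuclideanSpace ℝ (Fin n)) ∈ S → ⇑Ψ '' S + D ⊆ S → 𝓔 ⊆ S := by
  intro S hScl hS0 hInv
  subst h𝓔
  rintro x ⟨d, hd, hsum⟩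
  have key : ∀ N : ℕ, ∀ d : ℕ → EuclideanSpace ℝ (Fin n), (∀ i, d i ∈ D) →
      (∑ i ∈ Finset.range N, (Ψ ^ i) (d i)) ∈ S := by
    intro N
    induction N with
    | zero => intro d hd; simpa using hS0
    | succ N ih =>
      intro d hd
      have h1 : (∑ i ∈ Finset.range (N+1), (Ψ ^ i) (d i))
          = Ψ (∑ i ∈ Finset.range N, (Ψ ^ i) (d (i+1))) + d 0 := by
        rw [Finset.sum_range_succ', map_sum]
        simp [pow_succ', ContinuousLinearMap.mul_apply]
      rw [h1]
      exact hInv (Set.add_mem_add ⟨_, ih _ (fun i => hd _), rfl⟩ (hd 0))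
  exact hScl.mem_of_tendsto hsum.tendsto_sum_nat
    (Filter.Eventually.of_forall fun N => key N d hd)
end
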